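/- Let X₁, X₂, … be i.i.d. from a distribution P on a finite set 𝒳, let 𝐗ₙ = (X₁,…,Xₙ), and let G*ₙ be the optimal (probability-decreasing) guessing function on 𝒳ⁿ for the product distribution. Then for any ρ > 0, lim_{n→∞} (1/n) log E[G*ₙ(𝐗ₙ)^ρ] = ρ · H_{1/(1+ρ)}(X₁), where H_α is the Rényi entropy of order α. -/

import Mathlib

/-- Rényi entropy of order `α ≠ 1` (natural logarithm) of a distribution on a finite set. -/
noncomputable def renyiEntropy {𝒳 : Type*} [Fintype 𝒳] (α : ℝ) (P : 𝒳 → ℝ) : ℝ :=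
  (1 / (1 - α)) * Real.log (∑ x, P x ^ α)

/-- Arikan's upper bound for the optimal guessing function. -/
lemma guess_upper {X : Type*} [Fintype X] (Q : X → ℝ) (hQ0 : ∀ x, 0 ≤ Q x)
    (ρ : ℝ) (hρ : 0 < ρ)
    (hT : 0 < ∑ a, Q a ^ (1/(1+ρ)))
    (G : X ≃ Fin (Fintype.card X))
    (hdec : ∀ a b, (G a : ℕ) < (G b : ℕ) → Q b ≤ Q a) :
    ∑ a, Q a * ((G a : ℕ) + 1 : ℝ) ^ ρ ≤ (∑ a, Q a ^ (1/(1+ρ))) ^ (1+ρ) := by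
  classical
  have h1ρ : (0:ℝ) < 1 + ρ := by linarith
  set α : ℝ := 1/(1+ρ) with hα
  have hα0 : 0 < α := by positivity
  have hαρ : α * (1+ρ) = 1 := by rw [hα]; field_simp
  set T : ℝ := ∑ a, Q a ^ α with hTdef
  have key : ∀ a, Q a * ((G a : ℕ) + 1 : ℝ) ^ ρ ≤ Q a ^ α * T ^ ρ := by
    intro a
    rcases eq_or_lt_of_le (hQ0 a) with h | h
    · rw [← h, Real.zero_rpow (ne_of_gt hα0), zero_mul, zero_mul]
    · have hQaα : 0 < Q a ^ α := Real.rpow_pos_of_pos h α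
      have hcount : ((G a : ℕ) + 1 : ℝ) ≤ T / Q a ^ α := by
        have hsub : ((Finset.univ.filter (fun b => (G b : ℕ) ≤ (G a : ℕ))).card : ℝ)
            = (G a : ℕ) + 1 := by
          have hc : (Finset.univ.filter (fun b => (G b : ℕ) ≤ (G a : ℕ))).card
              = (Finset.Iic (G a)).card :=
            Finset.card_equiv G (fun b => by
              simp only [Finset.mem_filter, Finset.mem_univ, true_and, Finset.mem_Iic, Fin.le_def])
          rw [hc, Fin.card_Iic]
          push_cast
          ring
        rw [le_div_iff₀ hQaα]
        have h1 : ∀ b ∈ Finset.univ.filter (fun b => (G b : ℕ) ≤ (G a : ℕ)),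
            Q a ^ α ≤ Q b ^ α := by
          intro b hb
          simp only [Finset.mem_filter, Finset.mem_univ, true_and] at hb
          rcases lt_or_eq_of_le hb with hlt | heq
          · exact Real.rpow_le_rpow (hQ0 a) (hdec b a hlt) (le_of_lt hα0)
          · rw [G.injective (Fin.ext heq)]
        calc ((G a:ℕ)+1:ℝ) * Q a ^ α
            = ((Finset.univ.filter (fun b => (G b : ℕ) ≤ (G a : ℕ))).card : ℝ) * Q a ^ α := by
              rw [hsub]
          _ = (Finset.univ.filter (fun b => (G b : ℕ) ≤ (G a : ℕ))).card • (Q a ^ α) := by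
              rw [nsmul_eq_mul]
          _ ≤ ∑ b ∈ Finset.univ.filter (fun b => (G b : ℕ) ≤ (G a : ℕ)), Q b ^ α :=
              Finset.card_nsmul_le_sum _ _ _ h1
          _ ≤ T := Finset.sum_le_sum_of_subset_of_nonneg (Finset.subset_univ _)
              (fun b _ _ => Real.rpow_nonneg (hQ0 b) α)
      have hT0 : 0 ≤ T := le_of_lt hT
      have step1 : ((G a : ℕ) + 1 : ℝ) ^ ρ ≤ (T / Q a ^ α) ^ ρ :=
        Real.rpow_le_rpow (by positivity) hcount (le_of_lt hρ)
      have step2 : Q a * (T / Q a ^ α) ^ ρ = Q a ^ α * T ^ ρ := by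
        have e1 : (Q a ^ α) ^ ρ = Q a ^ (α * ρ) := (Real.rpow_mul (le_of_lt h) α ρ).symm
        have e2 : Q a ^ α * Q a ^ (α * ρ) = Q a := by
          rw [← Real.rpow_add h]
          have hαρ' : α + α * ρ = 1 := by nlinarith [hαρ]
          rw [hαρ', Real.rpow_one]
        have hpow : 0 < Q a ^ (α * ρ) := Real.rpow_pos_of_pos h _
        rw [Real.div_rpow hT0 (le_of_lt hQaα), e1, mul_div_assoc', div_eq_iff (ne_of_gt hpow)]
        linear_combination (-(T ^ ρ)) * e2
      calc Q a * ((G a : ℕ) + 1 : ℝ) ^ ρ ≤ Q a * (T / Q a ^ α) ^ ρ :=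
            mul_le_mul_of_nonneg_left step1 (le_of_lt h)
        _ = Q a ^ α * T ^ ρ := step2
  calc ∑ a, Q a * ((G a : ℕ) + 1 : ℝ) ^ ρ ≤ ∑ a, Q a ^ α * T ^ ρ :=
        Finset.sum_le_sum (fun a _ => key a)
    _ = T * T ^ ρ := by rw [← Finset.sum_mul]
    _ = T ^ (1+ρ) := by rw [Real.rpow_add hT, Real.rpow_one]

/-- Arikan's Hölder-based lower bound ingredient. -/
lemma guess_lower {X : Type*} [Fintype X] (Q : X → ℝ) (hQ0 : ∀ x, 0 ≤ Q x)
    (ρ : ℝ) (hρ : 0 < ρ) (G : X ≃ Fin (Fintype.card X)) :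
    ∑ a, Q a ^ (1/(1+ρ)) ≤ (∑ a, Q a * ((G a : ℕ) + 1 : ℝ) ^ ρ) ^ (1/(1+ρ)) *
      (harmonic (Fintype.card X) : ℝ) ^ (ρ/(1+ρ)) := by
  classical
  have h1ρ : (0:ℝ) < 1 + ρ := by linarith
  set α : ℝ := 1/(1+ρ) with hα
  have hα0 : 0 < α := by positivity
  have hαρ : α * (1+ρ) = 1 := by rw [hα]; field_simp
  set g : X → ℝ := fun a => ((G a : ℕ) : ℝ) + 1 with hg
  have hg0 : ∀ a, 0 < g a := fun a => by positivity
  have hgρ : ∀ a, 0 < g a ^ ρ := fun a => Real.rpow_pos_of_pos (hg0 a) ρ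
  set u : X → ℝ := fun a => (Q a * g a ^ ρ) ^ α with hu
  set v : X → ℝ := fun a => (g a ^ ρ) ^ (-α) with hv
  have hpq : Real.HolderConjugate (1+ρ) ((1+ρ)/ρ) := by
    rw [Real.holderConjugate_iff]
    constructor
    · linarith
    · field_simp
  have hhold := Real.inner_le_Lp_mul_Lq (s := Finset.univ) u v hpq
  have huv : ∀ a, u a * v a = Q a ^ α := by
    intro a
    show (Q a * g a ^ ρ) ^ α * (g a ^ ρ) ^ (-α) = Q a ^ α
    rw [Real.mul_rpow (hQ0 a) (le_of_lt (hgρ a)), mul_assoc,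
      ← Real.rpow_add (hgρ a), add_neg_cancel, Real.rpow_zero, mul_one]
  have hup : ∀ a, |u a| ^ (1+ρ) = Q a * g a ^ ρ := by
    intro a
    have hb : 0 ≤ Q a * g a ^ ρ := mul_nonneg (hQ0 a) (le_of_lt (hgρ a))
    rw [abs_of_nonneg (Real.rpow_nonneg hb α)]
    show ((Q a * g a ^ ρ) ^ α) ^ (1+ρ) = Q a * g a ^ ρ
    rw [← Real.rpow_mul hb, hαρ, Real.rpow_one]
  have hvq : ∀ a, |v a| ^ ((1+ρ)/ρ) = (g a)⁻¹ := by
    intro a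
    rw [abs_of_nonneg (Real.rpow_nonneg (le_of_lt (hgρ a)) _)]
    show ((g a ^ ρ) ^ (-α)) ^ ((1+ρ)/ρ) = (g a)⁻¹
    rw [← Real.rpow_mul (le_of_lt (hgρ a)), ← Real.rpow_mul (le_of_lt (hg0 a))]
    have he : ρ * (-α * ((1+ρ)/ρ)) = -1 := by
      rw [hα]; field_simp
    rw [he, Real.rpow_neg_one]
  have hvsum : ∑ a, (g a)⁻¹ = (harmonic (Fintype.card X) : ℝ) := by
    have e1 : ∑ a, (g a)⁻¹ = ∑ k : Fin (Fintype.card X), (((k : ℕ) : ℝ) + 1)⁻¹ :=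
      Equiv.sum_comp G (fun k => (((k : ℕ) : ℝ) + 1)⁻¹)
    rw [e1, Fin.sum_univ_eq_sum_range (fun i => (((i : ℕ) : ℝ) + 1)⁻¹)]
    unfold harmonic
    push_cast
    rfl
  calc ∑ a, Q a ^ α = ∑ a, u a * v a := Finset.sum_congr rfl (fun a _ => (huv a).symm)
    _ ≤ (∑ a, |u a| ^ (1+ρ)) ^ (1/(1+ρ)) * (∑ a, |v a| ^ ((1+ρ)/ρ)) ^ (1/((1+ρ)/ρ)) := hhold
    _ = (∑ a, Q a * g a ^ ρ) ^ (1/(1+ρ)) *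
        (harmonic (Fintype.card X) : ℝ) ^ (ρ/(1+ρ)) := by
      rw [Finset.sum_congr rfl (fun a _ => hup a), Finset.sum_congr rfl (fun a _ => hvq a),
        hvsum, one_div_div]

lemma aux_log_div_tendsto (c : ℝ) (hc : 0 ≤ c) :
    Filter.Tendsto (fun n : ℕ => Real.log (1 + n * c) / n) Filter.atTop (nhds 0) := by
  have hlog : Filter.Tendsto (fun n : ℕ => Real.log n / n) Filter.atTop (nhds 0) :=
    (Real.isLittleO_log_id_atTop.tendsto_div_nhds_zero).comp tendsto_natCast_atTop_atTop
  have hconst : Filter.Tendsto (fun n : ℕ => Real.log (1 + c) / n) Filter.atTop (nhds 0) :=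
    tendsto_const_div_atTop_nhds_zero_nat _
  have hupper := hconst.add hlog
  rw [add_zero] at hupper
  refine tendsto_of_tendsto_of_tendsto_of_le_of_le' tendsto_const_nhds hupper ?_ ?_
  · filter_upwards [Filter.eventually_ge_atTop 1] with n hn
    have hn' : (1:ℝ) ≤ n := by exact_mod_cast hn
    have h1 : (1:ℝ) ≤ 1 + n * c := by nlinarith
    exact div_nonneg (Real.log_nonneg h1) (by positivity)
  · filter_upwards [Filter.eventually_ge_atTop 1] with n hn
    have hn' : (1:ℝ) ≤ n := by exact_mod_cast hn
    have hn0 : (0:ℝ) < n := by linarith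
    have h1 : 1 + (n:ℝ) * c ≤ (1 + c) * n := by nlinarith
    have h2 : Real.log (1 + n*c) ≤ Real.log ((1+c)*n) := by
      apply Real.log_le_log (by nlinarith) h1
    rw [Real.log_mul (by nlinarith) (ne_of_gt hn0)] at h2
    rw [← add_div]
    exact div_le_div_of_nonneg_right h2 (le_of_lt hn0)

/-- Arikan's asymptotic result: if `X₁, X₂, …` are i.i.d. from `P` on a finite `𝒳` and
`G*ₙ` is an optimal (probability-decreasing) guessing function on `𝒳ⁿ` for the product
distribution, then for any `ρ > 0`,
`lim_{n→∞} (1/n) log E[G*ₙ(𝐗ₙ)^ρ] = ρ · H_{1/(1+ρ)}(X₁)`. -/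
theorem stmt_11 {𝒳 : Type*} [Fintype 𝒳]
    (P : 𝒳 → ℝ) (hP0 : ∀ x, 0 ≤ P x) (hP1 : ∑ x, P x = 1)
    (ρ : ℝ) (hρ : 0 < ρ)
    (Gstar : ∀ n : ℕ, (Fin n → 𝒳) ≃ Fin (Fintype.card (Fin n → 𝒳)))
    (hdec : ∀ (n : ℕ) (a b : Fin n → 𝒳),
      (Gstar n a : ℕ) < (Gstar n b : ℕ) → ∏ i, P (b i) ≤ ∏ i, P (a i)) :
    Filter.Tendsto
      (fun n : ℕ => (1 / (n : ℝ)) *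
        Real.log (∑ a : Fin n → 𝒳, (∏ i, P (a i)) * ((Gstar n a : ℕ) + 1 : ℝ) ^ ρ))
      Filter.atTop (nhds (ρ * renyiEntropy (1 / (1 + ρ)) P)) := by
  classical
  have h1ρ : (0:ℝ) < 1 + ρ := by linarith
  have hρ0 : ρ ≠ 0 := ne_of_gt hρ
  set α : ℝ := 1 / (1 + ρ) with hα
  have hα0 : 0 < α := by positivity
  have hα1 : α < 1 := by rw [hα, div_lt_one h1ρ]; linarith
  set S : ℝ := ∑ x, P x ^ α with hS
  have hPle1 : ∀ x, P x ≤ 1 := by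
    intro x
    calc P x ≤ ∑ y, P y := Finset.single_le_sum (fun y _ => hP0 y) (Finset.mem_univ x)
      _ = 1 := hP1
  have hS1 : 1 ≤ S := by
    rw [← hP1]
    apply Finset.sum_le_sum
    intro x _
    rcases eq_or_lt_of_le (hP0 x) with h | h
    · rw [← h, Real.zero_rpow (ne_of_gt hα0)]
    · calc P x = P x ^ (1:ℝ) := (Real.rpow_one _).symm
        _ ≤ P x ^ α := Real.rpow_le_rpow_of_exponent_ge h (hPle1 x) (le_of_lt hα1)
  have hS0 : 0 < S := lt_of_lt_of_le one_pos hS1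
  have hcard : 0 < Fintype.card 𝒳 := by
    rcases Nat.eq_zero_or_pos (Fintype.card 𝒳) with h | h
    · exfalso
      have : IsEmpty 𝒳 := Fintype.card_eq_zero_iff.mp h
      rw [Finset.univ_eq_empty, Finset.sum_empty] at hP1
      norm_num at hP1
    · exact h
  set c : ℝ := Real.log (Fintype.card 𝒳) with hc
  have hc0 : 0 ≤ c := Real.log_nonneg (by exact_mod_cast hcard)
  set F : ℕ → ℝ := fun n =>
    ∑ a : Fin n → 𝒳, (∏ i, P (a i)) * ((Gstar n a : ℕ) + 1 : ℝ) ^ ρ with hF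
  have hQ0 : ∀ (n : ℕ) (a : Fin n → 𝒳), 0 ≤ ∏ i, P (a i) := fun n a =>
    Finset.prod_nonneg fun i _ => hP0 _
  have hQsum : ∀ n : ℕ, ∑ a : Fin n → 𝒳, ∏ i, P (a i) = 1 := by
    intro n
    rw [← Fintype.prod_sum (fun (_ : Fin n) (x : 𝒳) => P x)]
    simp [hP1]
  have hSn : ∀ n : ℕ, ∑ a : Fin n → 𝒳, (∏ i, P (a i)) ^ α = S ^ n := by
    intro n
    have e : ∀ a : Fin n → 𝒳, (∏ i, P (a i)) ^ α = ∏ i, P (a i) ^ α := by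
      intro a
      rw [← Real.finset_prod_rpow _ _ (fun i _ => hP0 _) α]
    rw [Finset.sum_congr rfl (fun a _ => e a),
      ← Fintype.prod_sum (fun (_ : Fin n) (x : 𝒳) => P x ^ α), ← hS]
    rw [Finset.prod_const, Finset.card_univ, Fintype.card_fin]
  have hF1 : ∀ n, 1 ≤ F n := by
    intro n
    have hstep : ∀ a : Fin n → 𝒳,
        (∏ i, P (a i)) * 1 ≤ (∏ i, P (a i)) * ((Gstar n a : ℕ) + 1 : ℝ) ^ ρ := by
      intro a
      apply mul_le_mul_of_nonneg_left _ (hQ0 n a)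
      have h1 : (1:ℝ) ≤ ((Gstar n a : ℕ) + 1 : ℝ) := by
        have := Nat.cast_nonneg (α := ℝ) ((Gstar n a : ℕ))
        linarith
      calc (1:ℝ) = ((Gstar n a : ℕ) + 1 : ℝ) ^ (0:ℝ) := (Real.rpow_zero _).symm
        _ ≤ _ := Real.rpow_le_rpow_of_exponent_le h1 (le_of_lt hρ)
    calc (1:ℝ) = ∑ a : Fin n → 𝒳, ∏ i, P (a i) := (hQsum n).symm
      _ = ∑ a : Fin n → 𝒳, (∏ i, P (a i)) * 1 := by simp
      _ ≤ F n := Finset.sum_le_sum (fun a _ => hstep a)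
  have hFpos : ∀ n, 0 < F n := fun n => lt_of_lt_of_le one_pos (hF1 n)
  have hup : ∀ n : ℕ, F n ≤ (S ^ n) ^ (1+ρ) := by
    intro n
    have h := guess_upper (fun a : Fin n → 𝒳 => ∏ i, P (a i)) (hQ0 n) ρ hρ
      (by rw [← hα, hSn n]; exact pow_pos hS0 n) (Gstar n) (hdec n)
    rw [← hα, hSn n] at h
    exact h
  have hlo : ∀ n : ℕ, S ^ n ≤ F n ^ α * (1 + (n:ℝ) * c) ^ (ρ/(1+ρ)) := by
    intro n
    have h := guess_lower (fun a : Fin n → 𝒳 => ∏ i, P (a i)) (hQ0 n) ρ hρ (Gstar n)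
    rw [← hα, hSn n] at h
    refine le_trans h ?_
    have hM : Fintype.card (Fin n → 𝒳) = Fintype.card 𝒳 ^ n := by
      rw [Fintype.card_fun, Fintype.card_fin]
    have hMne : Fintype.card (Fin n → 𝒳) ≠ 0 := by
      rw [hM]
      exact pow_ne_zero n (Nat.pos_iff_ne_zero.mp hcard)
    have hh0 : (0:ℝ) ≤ (harmonic (Fintype.card (Fin n → 𝒳)) : ℝ) := by
      exact_mod_cast le_of_lt (harmonic_pos hMne)
    apply mul_le_mul_of_nonneg_left _ (Real.rpow_nonneg (le_of_lt (hFpos n)) α)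
    apply Real.rpow_le_rpow hh0 _ (by positivity)
    calc (harmonic (Fintype.card (Fin n → 𝒳)) : ℝ)
        ≤ 1 + Real.log (Fintype.card (Fin n → 𝒳)) := harmonic_le_one_add_log _
      _ = 1 + (n:ℝ) * c := by
          rw [hM]
          push_cast
          rw [Real.log_pow, ← hc]
  have htarget : ρ * renyiEntropy α P = (1+ρ) * Real.log S := by
    unfold renyiEntropy
    rw [← hS]
    have h1α : 1 - α = ρ/(1+ρ) := by rw [hα]; field_simp; ring
    rw [h1α, one_div_div, ← mul_assoc]
    congr 1
    field_simp
  have h_lower : Filter.Tendsto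
      (fun n : ℕ => (1+ρ) * Real.log S - ρ * (Real.log (1 + (n:ℝ) * c) / (n:ℝ)))
      Filter.atTop (nhds ((1+ρ) * Real.log S)) := by
    have h := (aux_log_div_tendsto c hc0).const_mul ρ
    rw [mul_zero] at h
    simpa using Filter.Tendsto.sub tendsto_const_nhds h
  have hgoal : Filter.Tendsto (fun n : ℕ => (1/(n:ℝ)) * Real.log (F n)) Filter.atTop
      (nhds ((1+ρ) * Real.log S)) := by
    refine tendsto_of_tendsto_of_tendsto_of_le_of_le' h_lower tendsto_const_nhds ?_ ?_
    · filter_upwards [Filter.eventually_ge_atTop 1] with n hn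
      have hn' : (1:ℝ) ≤ (n:ℝ) := by exact_mod_cast hn
      have hn0 : (0:ℝ) < (n:ℝ) := by linarith
      have hnc : (0:ℝ) ≤ (n:ℝ) * c := mul_nonneg (le_of_lt hn0) hc0
      have hbase : (0:ℝ) < 1 + (n:ℝ) * c := by linarith
      have hlog1 : (n:ℝ) * Real.log S ≤
          α * Real.log (F n) + (ρ/(1+ρ)) * Real.log (1 + (n:ℝ)*c) := by
        have h1 : Real.log (S^n) ≤ Real.log (F n ^ α * (1 + (n:ℝ)*c) ^ (ρ/(1+ρ))) :=
          Real.log_le_log (pow_pos hS0 n) (hlo n)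
        rw [Real.log_pow, Real.log_mul (ne_of_gt (Real.rpow_pos_of_pos (hFpos n) α))
          (ne_of_gt (Real.rpow_pos_of_pos hbase _)), Real.log_rpow (hFpos n),
          Real.log_rpow hbase] at h1
        exact h1
      have h3 : (n:ℝ) * ((1+ρ) * Real.log S) ≤
          Real.log (F n) + ρ * Real.log (1 + (n:ℝ)*c) := by
        have hmul := mul_le_mul_of_nonneg_left hlog1 (le_of_lt h1ρ)
        have h4 : (1+ρ) * ((n:ℝ) * Real.log S) = (n:ℝ) * ((1+ρ) * Real.log S) := by ring
        have h5 : (1+ρ) * (α * Real.log (F n) + (ρ/(1+ρ)) * Real.log (1 + (n:ℝ)*c))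
            = Real.log (F n) + ρ * Real.log (1 + (n:ℝ)*c) := by
          rw [hα]; field_simp
        rw [h4, h5] at hmul
        exact hmul
      calc (1+ρ) * Real.log S - ρ * (Real.log (1 + (n:ℝ)*c) / (n:ℝ))
          = ((n:ℝ) * ((1+ρ) * Real.log S) - ρ * Real.log (1 + (n:ℝ)*c)) / (n:ℝ) := by
            field_simp
        _ ≤ (Real.log (F n) + ρ * Real.log (1 + (n:ℝ)*c)
              - ρ * Real.log (1 + (n:ℝ)*c)) / (n:ℝ) := by
            apply div_le_div_of_nonneg_right _ (le_of_lt hn0)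
            linarith [h3]
        _ = (1/(n:ℝ)) * Real.log (F n) := by
            rw [add_sub_cancel_right]
            ring
    · filter_upwards [Filter.eventually_ge_atTop 1] with n hn
      have hn' : (1:ℝ) ≤ (n:ℝ) := by exact_mod_cast hn
      have hn0 : (0:ℝ) < (n:ℝ) := by linarith
      have hlogF : Real.log (F n) ≤ (1+ρ) * ((n:ℝ) * Real.log S) := by
        calc Real.log (F n) ≤ Real.log ((S^n)^(1+ρ)) :=
              Real.log_le_log (hFpos n) (hup n)
          _ = (1+ρ) * Real.log (S^n) := Real.log_rpow (pow_pos hS0 n) _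
          _ = (1+ρ) * ((n:ℝ) * Real.log S) := by rw [Real.log_pow]
      calc (1/(n:ℝ)) * Real.log (F n) ≤ (1/(n:ℝ)) * ((1+ρ) * ((n:ℝ) * Real.log S)) :=
            mul_le_mul_of_nonneg_left hlogF (by positivity)
        _ = (1+ρ) * Real.log S := by field_simp
  rw [htarget]
  exact hgoal
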